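/- Let 𝒫 be a nonempty set of martingale measures for S, let 𝕃¹ be the Banach-normed space with ‖f‖₁ = sup_{P∈𝒫} E_P[|f|], let ℂ = ({(H·S)_T : H predictable} − 𝔏⁰₊) ∩ 𝕃¹, and let Π be the set of continuous linear functionals ℓ on 𝕃¹ with ℓ(ℂ) ⊆ ℝ₋ and ℓ(1) = 1. Assume ℂ is closed in 𝕃¹. If f ∈ 𝕃¹ has 𝒫-uniformly integrable positive part and x := sup_{ℓ∈Π} ℓ(f) is finite, then f ∈ x + ℂ; i.e., there exists a predictable H with x + (H·S)_T ≥ f 𝒫-q.s. -/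

import Mathlib

open MeasureTheory Finset
open scoped Pointwise

set_option maxHeartbeats 1000000

/-- Superreplication theorem: if the cone `ℂ` of claims superreplicable from zero
capital is closed in the normed space `(𝕃¹, ‖·‖₁)` with `‖f‖₁ = sup_{P∈𝔓} E_P[|f|]`,
`f ∈ 𝕃¹` has 𝔓-uniformly integrable positive part, and
`x = sup {ℓ(f) : ℓ ∈ Π}` is finite (`Π` the continuous linear functionals with
`ℓ(ℂ) ⊆ ℝ₋` and `ℓ(1) = 1`), then `f ∈ x + ℂ`: there is a predictable `H` with
`x + (H·S)_T ≥ f` 𝔓-q.s. -/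
theorem stmt19 {Ω : Type*} {mΩ : MeasurableSpace Ω} (ℱ : Filtration ℕ mΩ) (T : ℕ)
    (𝔓 : Set (Measure Ω)) (h𝔓 : 𝔓.Nonempty)
    (S : ℕ → Ω → ℝ)
    (hmart : ∀ P ∈ 𝔓, IsProbabilityMeasure P ∧ Martingale S ℱ P)
    -- the space 𝕃¹
    (memL1 : (Ω → ℝ) → Prop)
    (hmemL1 : ∀ f, memL1 f ↔ Measurable f ∧ ∃ C : ℝ, ∀ P ∈ 𝔓, ∫ ω, |f ω| ∂P ≤ C)
    -- the norm ‖·‖₁ = sup_{P∈𝔓} E_P[|·|]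
    (norm1 : (Ω → ℝ) → ℝ)
    (hnorm1 : ∀ f, IsLUB {r : ℝ | ∃ P ∈ 𝔓, r = ∫ ω, |f ω| ∂P} (norm1 f))
    -- the cone ℂ = ({(H·S)_T : H predictable} − 𝔏⁰₊) ∩ 𝕃¹
    (Cone : Set (Ω → ℝ))
    (hCone : ∀ f, f ∈ Cone ↔ memL1 f ∧
      ∃ (H : ℕ → Ω → ℝ) (K : Ω → ℝ),
        (∀ t : ℕ, 1 ≤ t → StronglyMeasurable[ℱ (t - 1)] (H t)) ∧
        Measurable K ∧ (∀ P ∈ 𝔓, ∀ᵐ ω ∂P, 0 ≤ K ω) ∧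
        ∀ ω, f ω = (∑ u ∈ Finset.Icc 1 T, H u ω * (S u ω - S (u - 1) ω)) - K ω)
    -- ℂ is closed in 𝕃¹
    (hclosed : ∀ f, memL1 f → (∀ ε > (0:ℝ), ∃ g ∈ Cone, norm1 (f - g) ≤ ε) → f ∈ Cone)
    -- the pricing functionals Π
    (Pi : ((Ω → ℝ) → ℝ) → Prop)
    (hPi : ∀ ℓ, Pi ℓ ↔
      (∀ f g, memL1 f → memL1 g → ℓ (f + g) = ℓ f + ℓ g) ∧
      (∀ (c : ℝ) f, memL1 f → ℓ (c • f) = c * ℓ f) ∧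
      (∃ c : ℝ, ∀ f, memL1 f → |ℓ f| ≤ c * norm1 f) ∧
      (∀ w ∈ Cone, ℓ w ≤ 0) ∧ ℓ (fun _ => 1) = 1)
    -- the claim f
    (f : Ω → ℝ) (hf : memL1 f)
    -- f⁺ is 𝔓-uniformly integrable
    (hui : ∀ ε > (0:ℝ), ∃ N : ℕ, ∀ n ≥ N, ∀ P ∈ 𝔓,
      ∫ ω in {ω | (n:ℝ) ≤ max (f ω) 0}, max (f ω) 0 ∂P ≤ ε)
    -- x = sup_{ℓ ∈ Π} ℓ(f) is finite
    (x : ℝ) (hx : IsLUB {r : ℝ | ∃ ℓ, Pi ℓ ∧ r = ℓ f} x) :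
    ∃ H : ℕ → Ω → ℝ,
      (∀ t : ℕ, 1 ≤ t → StronglyMeasurable[ℱ (t - 1)] (H t)) ∧
      ∀ P ∈ 𝔓, ∀ᵐ ω ∂P,
        f ω ≤ x + ∑ u ∈ Finset.Icc 1 T, H u ω * (S u ω - S (u - 1) ω) := by
  classical
  have hfmeas : Measurable f := ((hmemL1 f).mp hf).1
  set p : Ω → ℝ := fun ω => f ω - x with hp_def
  have hpmeas : Measurable p := hfmeas.sub_const x
  -- memL1 is just measurability
  have hmem : ∀ g : Ω → ℝ, Measurable g → memL1 g := by
    intro g hg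
    exact (hmemL1 g).mpr ⟨hg, norm1 g, fun P hP => (hnorm1 g).1 ⟨P, hP, rfl⟩⟩
  have hn_ub : ∀ (g : Ω → ℝ), ∀ P ∈ 𝔓, ∫ ω, |g ω| ∂P ≤ norm1 g :=
    fun g P hP => (hnorm1 g).1 ⟨P, hP, rfl⟩
  have hn_le : ∀ (g : Ω → ℝ) (c : ℝ), (∀ P ∈ 𝔓, ∫ ω, |g ω| ∂P ≤ c) → norm1 g ≤ c := by
    intro g c h
    exact (hnorm1 g).2 (by rintro r ⟨P, hP, rfl⟩; exact h P hP)
  have hn_nonneg : ∀ g : Ω → ℝ, 0 ≤ norm1 g := by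
    intro g
    obtain ⟨P, hP⟩ := h𝔓
    exact le_trans (integral_nonneg fun ω => abs_nonneg _) (hn_ub g P hP)
  have hn_neg : ∀ g : Ω → ℝ, norm1 (-g) = norm1 g := by
    intro g
    have hset : {r : ℝ | ∃ P ∈ 𝔓, r = ∫ ω, |(-g) ω| ∂P}
        = {r : ℝ | ∃ P ∈ 𝔓, r = ∫ ω, |g ω| ∂P} := by
      simp only [_root_.Pi.neg_apply, abs_neg]
    exact (hnorm1 (-g)).unique (hset ▸ hnorm1 g)
  -- Cone constructors
  have cone_mk : ∀ (g : Ω → ℝ) (H : ℕ → Ω → ℝ) (K : Ω → ℝ), Measurable g →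
      (∀ t : ℕ, 1 ≤ t → StronglyMeasurable[ℱ (t - 1)] (H t)) → Measurable K →
      (∀ P ∈ 𝔓, ∀ᵐ ω ∂P, 0 ≤ K ω) →
      (∀ ω, g ω = (∑ u ∈ Finset.Icc 1 T, H u ω * (S u ω - S (u - 1) ω)) - K ω) →
      g ∈ Cone := by
    intro g H K hg hH hK hK0 heq
    exact (hCone g).mpr ⟨hmem g hg, H, K, hH, hK, hK0, heq⟩
  have cone_zero : (0 : Ω → ℝ) ∈ Cone := by
    refine cone_mk 0 (fun _ => 0) 0 measurable_const
      (fun t ht => stronglyMeasurable_const) measurable_const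
      (fun P hP => ae_of_all _ fun ω => le_refl 0) (fun ω => by simp)
  have cone_smul : ∀ (r : ℝ), 0 ≤ r → ∀ g ∈ Cone, (fun ω => r * g ω) ∈ Cone := by
    intro r hr g hgmem
    obtain ⟨hg1, H, K, hH, hK, hK0, heq⟩ := (hCone g).mp hgmem
    have hgm : Measurable g := ((hmemL1 g).mp hg1).1
    refine cone_mk _ (fun t ω => r * H t ω) (fun ω => r * K ω) (hgm.const_mul r)
      (fun t ht => stronglyMeasurable_const.mul (hH t ht)) (hK.const_mul r)
      (fun P hP => (hK0 P hP).mono fun ω h => mul_nonneg hr h) (fun ω => ?_)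
    rw [heq ω, mul_sub, Finset.mul_sum]
    congr 1
    exact Finset.sum_congr rfl fun u _ => by ring
  have cone_add : ∀ g₁ ∈ Cone, ∀ g₂ ∈ Cone, (fun ω => g₁ ω + g₂ ω) ∈ Cone := by
    intro g₁ hg₁ g₂ hg₂
    obtain ⟨hm₁, H₁, K₁, hH₁, hK₁, hK₁0, heq₁⟩ := (hCone g₁).mp hg₁
    obtain ⟨hm₂, H₂, K₂, hH₂, hK₂, hK₂0, heq₂⟩ := (hCone g₂).mp hg₂
    have hgm₁ : Measurable g₁ := ((hmemL1 g₁).mp hm₁).1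
    have hgm₂ : Measurable g₂ := ((hmemL1 g₂).mp hm₂).1
    refine cone_mk _ (fun t ω => H₁ t ω + H₂ t ω) (fun ω => K₁ ω + K₂ ω) (hgm₁.add hgm₂)
      (fun t ht => (hH₁ t ht).add (hH₂ t ht)) (hK₁.add hK₂)
      (fun P hP => ((hK₁0 P hP).and (hK₂0 P hP)).mono fun ω h => add_nonneg h.1 h.2)
      (fun ω => ?_)
    have hsum : ∑ u ∈ Finset.Icc 1 T, (H₁ u ω + H₂ u ω) * (S u ω - S (u - 1) ω)
        = (∑ u ∈ Finset.Icc 1 T, H₁ u ω * (S u ω - S (u - 1) ω))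
          + ∑ u ∈ Finset.Icc 1 T, H₂ u ω * (S u ω - S (u - 1) ω) := by
      rw [← Finset.sum_add_distrib]
      exact Finset.sum_congr rfl fun u _ => by ring
    rw [heq₁ ω, heq₂ ω, hsum]; ring
  have cone_sub : ∀ g ∈ Cone, ∀ v : Ω → ℝ, Measurable v → (∀ ω, 0 ≤ v ω) →
      (fun ω => g ω - v ω) ∈ Cone := by
    intro g hgmem v hv hv0
    obtain ⟨hg1, H, K, hH, hK, hK0, heq⟩ := (hCone g).mp hgmem
    have hgm : Measurable g := ((hmemL1 g).mp hg1).1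
    refine cone_mk _ H (fun ω => K ω + v ω) (hgm.sub hv) hH (hK.add hv)
      (fun P hP => (hK0 P hP).mono fun ω h => add_nonneg h (hv0 ω)) (fun ω => ?_)
    rw [heq ω]; ring
  -- one
  have hone_mem : memL1 (fun _ : Ω => (1:ℝ)) := hmem _ measurable_const
  have cone_negone : ((-1 : ℝ) • (fun _ : Ω => (1:ℝ))) ∈ Cone := by
    refine cone_mk _ (fun _ => 0) (fun _ => 1) ((measurable_const : Measurable fun _ : Ω => (1:ℝ)).const_smul (-1))
      (fun t ht => stronglyMeasurable_const) measurable_const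
      (fun P hP => ae_of_all _ fun ω => zero_le_one) (fun ω => by simp)
  -- Pi is nonempty
  have hSne : {r : ℝ | ∃ ℓ, Pi ℓ ∧ r = ℓ f}.Nonempty := by
    by_contra h
    rw [Set.not_nonempty_iff_eq_empty] at h
    have hub : (x - 1) ∈ upperBounds {r : ℝ | ∃ ℓ, Pi ℓ ∧ r = ℓ f} := by
      rw [h]; intro r hr; exact absurd hr (Set.notMem_empty r)
    have := hx.2 hub
    linarith
  obtain ⟨r₀, ℓ₀, hℓ₀, hr₀⟩ := hSne
  obtain ⟨ℓ₀add, ℓ₀hom, ⟨c₀, hc₀⟩, ℓ₀cone, ℓ₀one⟩ := (hPi ℓ₀).mp hℓ₀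
  -- the key duality consequence of hx
  have heart : ∀ μ : (Ω → ℝ) → ℝ,
      (∀ a b, memL1 a → memL1 b → μ (a + b) = μ a + μ b) →
      (∀ (c : ℝ) a, memL1 a → μ (c • a) = c * μ a) →
      (∀ c : ℝ, 0 < c → (∀ a, memL1 a → |μ a| ≤ c * norm1 a) → True) →
      (∃ c : ℝ, ∀ a, memL1 a → |μ a| ≤ c * norm1 a) →
      (∀ w ∈ Cone, μ w ≤ 0) → μ p ≤ 0 := by
    intro μ hadd hhom _ hbdd hcone
    have h1 : 0 ≤ μ (fun _ => (1:ℝ)) := by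
      have h2 := hcone _ cone_negone
      rw [hhom (-1) _ hone_mem] at h2
      linarith
    have hfp : μ f = μ p + x * μ (fun _ => (1:ℝ)) := by
      have hfe : f = p + (x • fun _ : Ω => (1:ℝ)) := by
        funext ω
        simp [hp_def]
      have h3 : μ (p + (x • fun _ : Ω => (1:ℝ)))
          = μ p + μ (x • fun _ : Ω => (1:ℝ)) :=
        hadd _ _ (hmem _ hpmeas) (hmem _ ((measurable_const : Measurable fun _ : Ω => (1:ℝ)).const_smul x))
      rw [← hfe] at h3
      rw [h3, hhom x _ hone_mem]
    rcases lt_or_eq_of_le h1 with h1pos | h1zero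
    · -- normalize and put in Pi
      set ν : (Ω → ℝ) → ℝ := fun g => (μ (fun _ => (1:ℝ)))⁻¹ * μ g with hν
      have hπ : Pi ν := by
        rw [hPi]
        refine ⟨?_, ?_, ?_, ?_, ?_⟩
        · intro a b ha hb
          simp only [hν]
          rw [hadd a b ha hb]; ring
        · intro c a ha
          simp only [hν]
          rw [hhom c a ha]; ring
        · obtain ⟨c, hc⟩ := hbdd
          refine ⟨(μ fun _ => (1:ℝ))⁻¹ * c, fun a ha => ?_⟩
          simp only [hν, abs_mul, abs_inv, abs_of_pos h1pos, mul_assoc]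
          exact mul_le_mul_of_nonneg_left (hc a ha) (by positivity)
        · intro w hw
          exact mul_nonpos_of_nonneg_of_nonpos (inv_nonneg.mpr h1) (hcone w hw)
        · simp only [hν]
          field_simp
      have hle : ν f ≤ x := hx.1 ⟨ν, hπ, rfl⟩
      have hμf : μ f ≤ x * μ (fun _ => (1:ℝ)) := by
        simp only [hν] at hle
        rw [inv_mul_le_iff₀ h1pos] at hle
        linarith [hle]
      linarith [hfp, hμf]
    · -- μ 1 = 0
      by_contra hpos
      push_neg at hpos
      have hμf : μ f = μ p := by rw [hfp, ← h1zero]; ring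
      obtain ⟨c, hc⟩ := hbdd
      set t : ℝ := max ((x - ℓ₀ f) / μ p) 0 + 1 with ht_def
      have ht0 : 0 < t := by
        have := le_max_right ((x - ℓ₀ f) / μ p) 0
        simp only [ht_def]; linarith
      have htgt : (x - ℓ₀ f) / μ p < t := by
        have := le_max_left ((x - ℓ₀ f) / μ p) 0
        simp only [ht_def]; linarith
    
      set ℓt : (Ω → ℝ) → ℝ := fun g => ℓ₀ g + t * μ g with hℓt
      have hπt : Pi ℓt := by
        rw [hPi]
        refine ⟨?_, ?_, ?_, ?_, ?_⟩
        · intro a b ha hb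
          simp only [hℓt]
          rw [ℓ₀add a b ha hb, hadd a b ha hb]; ring
        · intro cc a ha
          simp only [hℓt]
          rw [ℓ₀hom cc a ha, hhom cc a ha]; ring
        · refine ⟨c₀ + t * c, fun a ha => ?_⟩
          simp only [hℓt]
          calc |ℓ₀ a + t * μ a| ≤ |ℓ₀ a| + |t * μ a| := abs_add_le _ _
            _ ≤ c₀ * norm1 a + t * (c * norm1 a) := by
                have h5 : |t * μ a| = t * |μ a| := by
                  rw [abs_mul, abs_of_pos ht0]
                rw [h5]
                exact add_le_add (hc₀ a ha) (mul_le_mul_of_nonneg_left (hc a ha) ht0.le)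
            _ = (c₀ + t * c) * norm1 a := by ring
        · intro w hw
          have := ℓ₀cone w hw
          have h6 := hcone w hw
          simp only [hℓt]
          nlinarith
        · simp only [hℓt, ℓ₀one, ← h1zero]; ring
      have hle : ℓt f ≤ x := hx.1 ⟨ℓt, hπt, rfl⟩
      simp only [hℓt] at hle
      rw [hμf] at hle
      rw [div_lt_iff₀ hpos] at htgt
      linarith
  by_cases hQall : ∀ ε : ℝ, 0 < ε → ∃ w ∈ Cone, ∃ v : Ω → ℝ, Measurable v ∧ (∀ ω, 0 ≤ v ω) ∧
      (∀ P ∈ 𝔓, Integrable v P → ∫ ω, v ω ∂P ≤ ε) ∧ ∀ ω, |p ω - w ω| ≤ v ω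
  · -- p ∈ Cone
    have hpC : p ∈ Cone := by
      refine hclosed p (hmem p hpmeas) ?_
      intro ε hε
      obtain ⟨w, hw, v, hvm, hv0, hvcl, hvcor⟩ := hQall (ε/3) (by linarith)
      set g : Ω → ℝ := fun ω => w ω - 2 * v ω with hg_def
      have hgC : g ∈ Cone := cone_sub w hw _ (hvm.const_mul 2) (fun ω => by have := hv0 ω; linarith)
      refine ⟨g, hgC, ?_⟩
      have hbounds : ∀ ω, v ω ≤ (p - g) ω ∧ (p - g) ω ≤ 3 * v ω := by
        intro ω
        have h := abs_le.mp (hvcor ω)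
        constructor
        · simp only [_root_.Pi.sub_apply, hg_def]
          linarith [h.1]
        · simp only [_root_.Pi.sub_apply, hg_def]
          linarith [h.2]
      apply hn_le
      intro P hP
      by_cases hvint : Integrable v P
      · have h1' : ∫ ω, |(p - g) ω| ∂P ≤ ∫ ω, 3 * v ω ∂P := by
          refine integral_mono_of_nonneg (ae_of_all _ fun ω => abs_nonneg _)
            (hvint.const_mul 3) (ae_of_all _ fun ω => ?_)
          show |(p - g) ω| ≤ 3 * v ω
          rw [abs_of_nonneg (le_trans (hv0 ω) (hbounds ω).1)]
          exact (hbounds ω).2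
        have h2' : ∫ ω, 3 * v ω ∂P = 3 * ∫ ω, v ω ∂P := by
          exact integral_const_mul 3 v
        have h3' := hvcl P hP hvint
        calc ∫ ω, |(p - g) ω| ∂P ≤ 3 * ∫ ω, v ω ∂P := by rw [← h2']; exact h1'
          _ ≤ 3 * (ε/3) := by linarith
          _ = ε := by ring
      · have hnone : ¬ Integrable (fun ω => |(p - g) ω|) P := by
          intro hcon
          apply hvint
          refine Integrable.mono' hcon hvm.aestronglyMeasurable (ae_of_all _ fun ω => ?_)
          rw [Real.norm_eq_abs, abs_of_nonneg (hv0 ω)]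
          exact le_trans (hbounds ω).1 (le_abs_self _)
        rw [integral_undef hnone]
        linarith
    obtain ⟨-, H, K, hH, hK, hK0, heq⟩ := (hCone p).mp hpC
    refine ⟨H, hH, fun P hP => ?_⟩
    filter_upwards [hK0 P hP] with ω hKω
    have h7 := heq ω
    rw [hp_def] at h7
    simp only at h7
    linarith
  · -- Phase 3: separation via gauge functional
    exfalso
    obtain ⟨ε₀, hε₀'⟩ := not_forall.mp hQall
    rw [Classical.not_imp] at hε₀'
    obtain ⟨hε₀, hnQ⟩ := hε₀'
    -- the submodule of measurable functions
    set VS : Submodule ℝ (Ω → ℝ) :=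
      { carrier := {g : Ω → ℝ | Measurable g}
        add_mem' := fun ha hb => Measurable.add ha hb
        zero_mem' := measurable_const
        smul_mem' := fun c g hg => hg.const_smul c } with hVS_def
    set U : Set VS := {g : VS | ∃ w ∈ Cone, ∃ v : Ω → ℝ, Measurable v ∧ (∀ ω, 0 ≤ v ω) ∧
        (∀ P ∈ 𝔓, Integrable v P → ∫ ω, v ω ∂P ≤ ε₀) ∧
        ∀ ω, |(g : Ω → ℝ) ω - w ω| ≤ v ω} with hU_def
    -- membership helper
    have hUmem' : ∀ (g : VS) (c : ℝ), norm1 (g : Ω → ℝ) < |c| * ε₀ → g ∈ c • U := by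
      intro g c hcg
      have hc0 : c ≠ 0 := by
        intro h
        rw [h] at hcg
        simp at hcg
        exact absurd hcg (not_lt.mpr (hn_nonneg _))
      have habs : 0 < |c| := abs_pos.mpr hc0
      rw [Set.mem_smul_set]
      refine ⟨c⁻¹ • g, ?_, smul_inv_smul₀ hc0 g⟩
      refine ⟨0, cone_zero, fun ω => |c|⁻¹ * |(g : Ω → ℝ) ω|, ?_, ?_, ?_, ?_⟩
      · exact ((g.2 : Measurable (g : Ω → ℝ)).abs).const_mul _
      · intro ω; positivity
      · intro P hP hint
        have h1 : ∫ ω, |c|⁻¹ * |(g : Ω → ℝ) ω| ∂P = |c|⁻¹ * ∫ ω, |(g : Ω → ℝ) ω| ∂P :=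
          integral_const_mul _ _
        rw [h1]
        calc |c|⁻¹ * ∫ ω, |(g : Ω → ℝ) ω| ∂P ≤ |c|⁻¹ * norm1 (g : Ω → ℝ) :=
              mul_le_mul_of_nonneg_left (hn_ub _ P hP) (by positivity)
          _ ≤ ε₀ := by
              rw [inv_mul_le_iff₀ habs]
              exact le_of_lt (by linarith [hcg])
      · intro ω
        have h2 : ((c⁻¹ • g : VS) : Ω → ℝ) ω = c⁻¹ * (g : Ω → ℝ) ω := rfl
        have h3 : ((0 : Ω → ℝ)) ω = 0 := rfl
        rw [h2]
        simp only [_root_.Pi.zero_apply, sub_zero]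
        rw [abs_mul, abs_inv]
    have hUabs : Absorbent ℝ U := by
      intro g
      refine Absorbs.of_norm ⟨norm1 (g : Ω → ℝ) / ε₀ + 1, fun c hc => ?_⟩
      rw [Set.singleton_subset_iff]
      refine hUmem' g c ?_
      have h4 : ‖c‖ = |c| := rfl
      rw [h4] at hc
      have h5 : (norm1 (g : Ω → ℝ) / ε₀ + 1) * ε₀ ≤ |c| * ε₀ :=
        mul_le_mul_of_nonneg_right hc hε₀.le
      have h6 : (norm1 (g : Ω → ℝ) / ε₀ + 1) * ε₀ = norm1 (g : Ω → ℝ) + ε₀ := by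
        field_simp
      linarith
    have hUconv : Convex ℝ U := by
      intro g₁ hg₁ g₂ hg₂ a b ha hb hab
      obtain ⟨w₁, hw₁, v₁, hm₁, h0₁, hcl₁, hcor₁⟩ := hg₁
      obtain ⟨w₂, hw₂, v₂, hm₂, h0₂, hcl₂, hcor₂⟩ := hg₂
      refine ⟨(fun ω => (fun ω' => a * w₁ ω') ω + (fun ω' => b * w₂ ω') ω),
        cone_add _ (cone_smul a ha w₁ hw₁) _ (cone_smul b hb w₂ hw₂),
        fun ω => a * v₁ ω + b * v₂ ω,
        (hm₁.const_mul a).add (hm₂.const_mul b),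
        fun ω => add_nonneg (mul_nonneg ha (h0₁ ω)) (mul_nonneg hb (h0₂ ω)), ?_, ?_⟩
      · -- integrability bound
        intro P hP hint
        rcases eq_or_lt_of_le ha with ha0 | hapos
        · -- a = 0, b = 1
          have hb1 : b = 1 := by linarith
          have hfun : (fun ω => a * v₁ ω + b * v₂ ω) = v₂ := by
            funext ω; rw [← ha0, hb1]; ring
          rw [hfun] at hint ⊢
          exact hcl₂ P hP hint
        rcases eq_or_lt_of_le hb with hb0 | hbpos
        · have ha1 : a = 1 := by linarith
          have hfun : (fun ω => a * v₁ ω + b * v₂ ω) = v₁ := by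
            funext ω; rw [← hb0, ha1]; ring
          rw [hfun] at hint ⊢
          exact hcl₁ P hP hint
        · -- both positive
          have hint₁ : Integrable v₁ P := by
            refine Integrable.mono' (hint.const_mul a⁻¹) hm₁.aestronglyMeasurable
              (ae_of_all _ fun ω => ?_)
            rw [Real.norm_eq_abs, abs_of_nonneg (h0₁ ω)]
            rw [mul_add, ← mul_assoc, inv_mul_cancel₀ (ne_of_gt hapos), one_mul]
            have h8 : 0 ≤ a⁻¹ * (b * v₂ ω) := mul_nonneg (inv_nonneg.mpr ha) (mul_nonneg hb (h0₂ ω))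
            linarith
          have hint₂ : Integrable v₂ P := by
            refine Integrable.mono' (hint.const_mul b⁻¹) hm₂.aestronglyMeasurable
              (ae_of_all _ fun ω => ?_)
            rw [Real.norm_eq_abs, abs_of_nonneg (h0₂ ω)]
            rw [mul_add]
            rw [show b⁻¹ * (b * v₂ ω) = v₂ ω by field_simp]
            have h8 : 0 ≤ b⁻¹ * (a * v₁ ω) := mul_nonneg (inv_nonneg.mpr hb) (mul_nonneg ha (h0₁ ω))
            linarith
          have hsplit : ∫ ω, (a * v₁ ω + b * v₂ ω) ∂P
              = a * ∫ ω, v₁ ω ∂P + b * ∫ ω, v₂ ω ∂P := by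
            rw [integral_add (hint₁.const_mul a) (hint₂.const_mul b),
              integral_const_mul, integral_const_mul]
          rw [hsplit]
          calc a * ∫ ω, v₁ ω ∂P + b * ∫ ω, v₂ ω ∂P
              ≤ a * ε₀ + b * ε₀ := add_le_add
                (mul_le_mul_of_nonneg_left (hcl₁ P hP hint₁) ha)
                (mul_le_mul_of_nonneg_left (hcl₂ P hP hint₂) hb)
            _ = ε₀ := by rw [← add_mul, hab, one_mul]
      · -- corridor bound
        intro ω
        have hval : ((a • g₁ + b • g₂ : VS) : Ω → ℝ) ω
            = a * (g₁ : Ω → ℝ) ω + b * (g₂ : Ω → ℝ) ω := rfl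
        rw [hval]
        simp only
        have h7 : a * (g₁ : Ω → ℝ) ω + b * (g₂ : Ω → ℝ) ω - (a * w₁ ω + b * w₂ ω)
            = a * ((g₁ : Ω → ℝ) ω - w₁ ω) + b * ((g₂ : Ω → ℝ) ω - w₂ ω) := by ring
        rw [h7]
        calc |a * ((g₁ : Ω → ℝ) ω - w₁ ω) + b * ((g₂ : Ω → ℝ) ω - w₂ ω)|
            ≤ |a * ((g₁ : Ω → ℝ) ω - w₁ ω)| + |b * ((g₂ : Ω → ℝ) ω - w₂ ω)| := abs_add_le _ _
          _ = a * |(g₁ : Ω → ℝ) ω - w₁ ω| + b * |(g₂ : Ω → ℝ) ω - w₂ ω| := by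
              rw [abs_mul, abs_mul, abs_of_nonneg ha, abs_of_nonneg hb]
          _ ≤ a * v₁ ω + b * v₂ ω := add_le_add
              (mul_le_mul_of_nonneg_left (hcor₁ ω) ha)
              (mul_le_mul_of_nonneg_left (hcor₂ ω) hb)
    -- gauge facts
    have hgauge_le : ∀ g : VS, gauge U g ≤ ε₀⁻¹ * norm1 (g : Ω → ℝ) := by
      intro g
      refine le_of_forall_gt_imp_ge_of_dense fun r hr => ?_
      have hr0 : 0 < r := lt_of_le_of_lt (mul_nonneg (inv_nonneg.mpr hε₀.le) (hn_nonneg _)) hr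
      have hmem' : g ∈ r • U := by
        refine hUmem' g r ?_
        rw [abs_of_pos hr0]
        rw [show ε₀⁻¹ * norm1 (g : Ω → ℝ) = norm1 (g : Ω → ℝ) / ε₀ by ring] at hr
        rw [div_lt_iff₀ hε₀] at hr
        linarith
      exact gauge_le_of_mem hr0.le hmem'
    have hgauge_cone : ∀ (w : Ω → ℝ) (hwC : w ∈ Cone) (hwm : Measurable w),
        gauge U (⟨w, hwm⟩ : VS) ≤ 0 := by
      intro w hwC hwm
      refine le_of_forall_gt_imp_ge_of_dense fun r hr => ?_
      have hmem' : (⟨w, hwm⟩ : VS) ∈ r • U := by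
        rw [Set.mem_smul_set]
        refine ⟨r⁻¹ • ⟨w, hwm⟩, ?_, smul_inv_smul₀ (ne_of_gt hr) _⟩
        refine ⟨(fun ω => r⁻¹ * w ω), cone_smul r⁻¹ (inv_nonneg.mpr hr.le) w hwC,
          (fun _ => 0), measurable_const, fun ω => le_refl 0, ?_, ?_⟩
        · intro P hP hint
          simpa using hε₀.le
        · intro ω
          have h2 : ((r⁻¹ • (⟨w, hwm⟩ : VS) : VS) : Ω → ℝ) ω = r⁻¹ * w ω := rfl
          rw [h2]
          simp
      exact gauge_le_of_mem hr.le hmem'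
    -- p as an element of VS
    have hpne : (⟨p, hpmeas⟩ : VS) ≠ 0 := by
      intro h0
      apply hnQ
      refine ⟨0, cone_zero, fun _ => 0, measurable_const, fun ω => le_refl 0, ?_, ?_⟩
      · intro P hP hint
        simpa using hε₀.le
      · intro ω
        have hp0 : p ω = 0 := by
          have := congrArg (fun (z : VS) => (z : Ω → ℝ) ω) h0
          simpa using this
        simp [hp0]
    have hgauge_p : 1 ≤ gauge U ⟨p, hpmeas⟩ := by
      by_contra hlt
      push_neg at hlt
      have hbdd : BddBelow {r ∈ Set.Ioi (0:ℝ) | (⟨p, hpmeas⟩ : VS) ∈ r • U} :=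
        ⟨0, fun r hr => le_of_lt hr.1⟩
      have hne : {r ∈ Set.Ioi (0:ℝ) | (⟨p, hpmeas⟩ : VS) ∈ r • U}.Nonempty := by
        refine ⟨norm1 p / ε₀ + 1, ?_, ?_⟩
        · have h9' : 0 ≤ norm1 p / ε₀ := div_nonneg (hn_nonneg p) hε₀.le
          exact Set.mem_Ioi.mpr (by linarith)
        · refine hUmem' _ _ ?_
          have h9 : 0 ≤ norm1 p / ε₀ := div_nonneg (hn_nonneg p) hε₀.le
          rw [abs_of_pos (by linarith : (0:ℝ) < norm1 p / ε₀ + 1)]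
          have h10 : (norm1 p / ε₀ + 1) * ε₀ = norm1 p + ε₀ := by field_simp
          rw [h10]
          linarith [hn_nonneg p]
      rw [gauge_def] at hlt
      obtain ⟨r, ⟨hr0, hrU⟩, hr1⟩ := (csInf_lt_iff hbdd hne).mp hlt
      rw [Set.mem_Ioi] at hr0
      rw [Set.mem_smul_set] at hrU
      obtain ⟨g, hgU, hsc⟩ := hrU
      obtain ⟨w, hwC, v, hvm, hv0, hvcl, hvcor⟩ := hgU
      apply hnQ
      refine ⟨(fun ω => r * w ω), cone_smul r hr0.le w hwC, fun ω => r * v ω,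
        hvm.const_mul r, fun ω => mul_nonneg hr0.le (hv0 ω), ?_, ?_⟩
      · intro P hP hint
        have hintv : Integrable v P := by
          have h11 : v = fun ω => r⁻¹ * (r * v ω) := by
            funext ω; field_simp
          rw [h11]
          exact hint.const_mul _
        have h12 : ∫ ω, r * v ω ∂P = r * ∫ ω, v ω ∂P := integral_const_mul _ _
        rw [h12]
        calc r * ∫ ω, v ω ∂P ≤ r * ε₀ := mul_le_mul_of_nonneg_left (hvcl P hP hintv) hr0.le
          _ ≤ 1 * ε₀ := mul_le_mul_of_nonneg_right hr1.le hε₀.le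
          _ = ε₀ := one_mul _
      · intro ω
        have hpg : p ω = r * (g : Ω → ℝ) ω := by
          have := congrArg (fun (z : VS) => (z : Ω → ℝ) ω) hsc
          simpa using this.symm
        rw [hpg]
        have h13 : r * (g : Ω → ℝ) ω - r * w ω = r * ((g : Ω → ℝ) ω - w ω) := by ring
        rw [h13, abs_mul, abs_of_pos hr0]
        exact mul_le_mul_of_nonneg_left (hvcor ω) hr0.le
    -- Hahn-Banach extension
    have hNhom : ∀ c : ℝ, 0 < c → ∀ z : VS, gauge U (c • z) = c * gauge U z := by
      intro c hc z
      rw [gauge_smul_of_nonneg hc.le]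
      rfl
    have hNadd : ∀ z y : VS, gauge U (z + y) ≤ gauge U z + gauge U y :=
      fun z y => gauge_add_le hUconv hUabs z y
    set f₀ : VS →ₗ.[ℝ] ℝ := LinearPMap.mkSpanSingleton (⟨p, hpmeas⟩ : VS) (gauge U ⟨p, hpmeas⟩) hpne with hf₀
    have hf₀dom : ∀ z : f₀.domain, f₀ z ≤ gauge U (z : VS) := by
      intro z
      obtain ⟨cc, hcc⟩ := Submodule.mem_span_singleton.mp z.2
      have hz : z = ⟨cc • (⟨p, hpmeas⟩ : VS), by rw [hcc]; exact z.2⟩ := by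
        apply Subtype.ext
        exact hcc.symm
      rw [hz]
      have happ : f₀ ⟨cc • (⟨p, hpmeas⟩ : VS), by rw [hcc]; exact z.2⟩
          = cc • gauge U ⟨p, hpmeas⟩ := by
        exact LinearPMap.mkSpanSingleton'_apply _ _ _ cc _
      rw [happ]
      rcases le_or_gt 0 cc with hcc0 | hcc0
      · rw [show ((⟨cc • (⟨p, hpmeas⟩ : VS), by rw [hcc]; exact z.2⟩ : f₀.domain) : VS)
            = cc • (⟨p, hpmeas⟩ : VS) from rfl]
        rw [gauge_smul_of_nonneg hcc0]
      · have h14 : cc • gauge U (⟨p, hpmeas⟩ : VS) ≤ 0 := by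
          have := hgauge_p
          have h15 : cc • gauge U (⟨p, hpmeas⟩ : VS) = cc * gauge U (⟨p, hpmeas⟩ : VS) := rfl
          rw [h15]
          nlinarith
        exact le_trans h14 (gauge_nonneg _)
    obtain ⟨μL, hμext, hμle⟩ := exists_extension_of_le_sublinear f₀ (gauge U) hNhom hNadd hf₀dom
    have hμLp : μL ⟨p, hpmeas⟩ = gauge U ⟨p, hpmeas⟩ := by
      have h16 := hμext ⟨(⟨p, hpmeas⟩ : VS), Submodule.mem_span_singleton_self _⟩
      rw [h16]
      exact LinearPMap.mkSpanSingleton_apply ℝ ℝ hpne _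
    -- the functional on functions
    set μ : (Ω → ℝ) → ℝ := fun g => if h : Measurable g then μL ⟨g, h⟩ else 0 with hμ_def
    have hμval : ∀ (g : Ω → ℝ) (h : Measurable g), μ g = μL ⟨g, h⟩ := by
      intro g h
      simp only [hμ_def, dif_pos h]
    have hμadd : ∀ a b : Ω → ℝ, memL1 a → memL1 b → μ (a + b) = μ a + μ b := by
      intro a b ha hb
      have ham : Measurable a := ((hmemL1 a).mp ha).1
      have hbm : Measurable b := ((hmemL1 b).mp hb).1
      rw [hμval a ham, hμval b hbm, hμval (a + b) (ham.add hbm)]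
      have h17 : (⟨a + b, ham.add hbm⟩ : VS) = ⟨a, ham⟩ + ⟨b, hbm⟩ := rfl
      rw [h17, map_add]
    have hμhom : ∀ (c : ℝ) (a : Ω → ℝ), memL1 a → μ (c • a) = c * μ a := by
      intro c a ha
      have ham : Measurable a := ((hmemL1 a).mp ha).1
      rw [hμval a ham, hμval (c • a) (ham.const_smul c)]
      have h18 : (⟨c • a, ham.const_smul c⟩ : VS) = c • ⟨a, ham⟩ := rfl
      rw [h18, LinearMap.map_smul]
      exact smul_eq_mul _ _
    have hμbdd : ∃ c : ℝ, ∀ a : Ω → ℝ, memL1 a → |μ a| ≤ c * norm1 a := by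
      refine ⟨ε₀⁻¹, fun a ha => ?_⟩
      have ham : Measurable a := ((hmemL1 a).mp ha).1
      rw [hμval a ham]
      rw [abs_le]
      constructor
      · have h19 := hμle (-(⟨a, ham⟩ : VS))
        rw [map_neg] at h19
        have h20 : gauge U (-(⟨a, ham⟩ : VS)) ≤ ε₀⁻¹ * norm1 (((-(⟨a, ham⟩ : VS)) : VS) : Ω → ℝ) :=
          hgauge_le _
        have h21 : (((-(⟨a, ham⟩ : VS)) : VS) : Ω → ℝ) = -a := rfl
        rw [h21, hn_neg] at h20
        linarith
      · have h22 := hμle (⟨a, ham⟩ : VS)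
        have h23 := hgauge_le (⟨a, ham⟩ : VS)
        exact le_trans h22 h23
    have hμcone : ∀ w ∈ Cone, μ w ≤ 0 := by
      intro w hwC
      have hwm : Measurable w := ((hmemL1 w).mp ((hCone w).mp hwC).1).1
      rw [hμval w hwm]
      exact le_trans (hμle _) (hgauge_cone w hwC hwm)
    have hfinal := heart μ hμadd hμhom (fun _ _ _ => trivial) hμbdd hμcone
    rw [hμval p hpmeas, hμLp] at hfinal
    linarith [hgauge_p]
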